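/- arXiv:2209.05550 — 5 statements merged into one kernel-verified Lean document; each statement's English description precedes it below -/
import Mathlib

section
/- For each u ∈ [U] and i ∈ [n], the variance of G_{u,i} = (V_{u,i} − Y_{u,i})² − V_{u,i} − Y_{u,i} equals Var(G_{u,i}) = 4·m³·(P_{u,i} − Q_{u,i})²·(P_{u,i} + Q_{u,i}) + 2·m²·(P_{u,i} + Q_{u,i})². -/
open MeasureTheory ProbabilityTheory NNReal Real
open scoped ENNReal

noncomputable def myMom : ℕ → ℝ → ℝ
  | 0, _ => 1
  | 1, r => r
  | 2, r => r^2 + r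
  | 3, r => r^3 + 3*r^2 + r
  | 4, r => r^4 + 6*r^3 + 7*r^2 + r
  | _, _ => 0

lemma hasSum_desc (r : ℝ≥0) (k : ℕ) :
    HasSum (fun n => (Nat.descFactorial n k : ℝ) * poissonPMFReal r n) ((r:ℝ)^k) := by
  have h0 : ∀ j : ℕ, (Nat.descFactorial (j+k) k : ℝ) * poissonPMFReal r (j+k)
      = (r:ℝ)^k * poissonPMFReal r j := by
    intro j
    have hfact : ((j+k).factorial : ℝ)
        = (j.factorial : ℝ) * (Nat.descFactorial (j+k) k : ℝ) := by
      have := Nat.factorial_mul_descFactorial (Nat.le_add_left k j)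
      rw [Nat.add_sub_cancel] at this
      exact_mod_cast this.symm
    unfold poissonPMFReal
    have hj : (0:ℝ) < (j.factorial : ℝ) := by positivity
    have hjk : (0:ℝ) < ((j+k).factorial : ℝ) := by positivity
    field_simp [hfact]
    rw [hfact]; ring
  have h1 : HasSum (fun j : ℕ => (r:ℝ)^k * poissonPMFReal r j) ((r:ℝ)^k) := by
    simpa [poissonPMFReal] using (poissonPMFRealSum r).mul_left ((r:ℝ)^k)
  have h2 : HasSum (fun j : ℕ =>
      (Nat.descFactorial (j+k) k : ℝ) * poissonPMFReal r (j+k)) ((r:ℝ)^k) := by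
    simpa [h0] using h1
  have h3 : ∑ i ∈ Finset.range k,
      (Nat.descFactorial i k : ℝ) * poissonPMFReal r i = 0 := by
    apply Finset.sum_eq_zero
    intro i hi
    have : Nat.descFactorial i k = 0 :=
      Nat.descFactorial_eq_zero_iff_lt.2 (Finset.mem_range.1 hi)
    simp [this]
  rw [← hasSum_nat_add_iff' k]
  rw [h3, sub_zero]
  exact h2

lemma cast_desc1 (n : ℕ) : (Nat.descFactorial n 1 : ℝ) = (n:ℝ) := by
  simp

lemma cast_desc2 (n : ℕ) : (Nat.descFactorial n 2 : ℝ) = (n:ℝ) * ((n:ℝ) - 1) := by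
  cases n with
  | zero => simp
  | succ m => simp [Nat.descFactorial]; push_cast; ring

lemma cast_desc3 (n : ℕ) :
    (Nat.descFactorial n 3 : ℝ) = (n:ℝ) * ((n:ℝ) - 1) * ((n:ℝ) - 2) := by
  match n with
  | 0 => simp
  | 1 => simp [Nat.descFactorial]
  | (m+2) => simp [Nat.descFactorial]; push_cast; ring

lemma cast_desc4 (n : ℕ) :
    (Nat.descFactorial n 4 : ℝ) = (n:ℝ) * ((n:ℝ) - 1) * ((n:ℝ) - 2) * ((n:ℝ) - 3) := by
  match n with
  | 0 => simp
  | 1 => simp [Nat.descFactorial]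
  | 2 => simp [Nat.descFactorial]
  | (m+3) => simp [Nat.descFactorial]; push_cast; ring

lemma poisson_hasSum_pow (r : ℝ≥0) (k : ℕ) (hk : k ≤ 4) :
    HasSum (fun n : ℕ => (n:ℝ)^k * poissonPMFReal r n) (myMom k (r:ℝ)) := by
  interval_cases k
  · simpa [myMom, poissonPMFReal] using poissonPMFRealSum r
  · simpa [myMom, cast_desc1] using hasSum_desc r 1
  · have h := (hasSum_desc r 2).add (hasSum_desc r 1)
    have he : (fun n : ℕ => (Nat.descFactorial n 2 : ℝ) * poissonPMFReal r n
        + (Nat.descFactorial n 1 : ℝ) * poissonPMFReal r n)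
        = fun n : ℕ => (n:ℝ)^2 * poissonPMFReal r n := by
      funext n; rw [cast_desc1, cast_desc2]; ring
    rw [he] at h
    simpa [myMom] using h
  · have h := ((hasSum_desc r 3).add ((hasSum_desc r 2).mul_left 3)).add (hasSum_desc r 1)
    have he : (fun n : ℕ => ((Nat.descFactorial n 3 : ℝ) * poissonPMFReal r n
        + 3 * ((Nat.descFactorial n 2 : ℝ) * poissonPMFReal r n))
        + (Nat.descFactorial n 1 : ℝ) * poissonPMFReal r n)
        = fun n : ℕ => (n:ℝ)^3 * poissonPMFReal r n := by
      funext n; rw [cast_desc1, cast_desc2, cast_desc3]; ring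
    rw [he] at h
    simpa [myMom] using h
  · have h := (((hasSum_desc r 4).add ((hasSum_desc r 3).mul_left 6)).add
      ((hasSum_desc r 2).mul_left 7)).add (hasSum_desc r 1)
    have he : (fun n : ℕ => (((Nat.descFactorial n 4 : ℝ) * poissonPMFReal r n
        + 6 * ((Nat.descFactorial n 3 : ℝ) * poissonPMFReal r n))
        + 7 * ((Nat.descFactorial n 2 : ℝ) * poissonPMFReal r n))
        + (Nat.descFactorial n 1 : ℝ) * poissonPMFReal r n)
        = fun n : ℕ => (n:ℝ)^4 * poissonPMFReal r n := by
      funext n; rw [cast_desc1, cast_desc2, cast_desc3, cast_desc4]; ring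
    rw [he] at h
    simpa [myMom] using h

lemma poisson_integrable_of_hasSum (r : ℝ≥0) (f : ℕ → ℝ) (hf : ∀ n, 0 ≤ f n) {c : ℝ}
    (h : HasSum (fun n => f n * poissonPMFReal r n) c) :
    Integrable f (poissonMeasure r) := by
  constructor
  · exact (measurable_from_nat (f := f)).aestronglyMeasurable
  · rw [HasFiniteIntegral, lintegral_countable']
    have heq : ∀ n : ℕ, ‖f n‖ₑ * poissonMeasure r {n}
        = ENNReal.ofReal (f n * poissonPMFReal r n) := by
      intro n
      have h1 : poissonMeasure r {n} = ENNReal.ofReal (poissonPMFReal r n) := by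
        rw [poissonMeasure_singleton]
        rfl
      rw [h1, ENNReal.ofReal_mul (hf n)]
      congr 1
      rw [← ofReal_norm, Real.norm_eq_abs, abs_of_nonneg (hf n)]
    simp_rw [heq]
    rw [← ENNReal.ofReal_tsum_of_nonneg
      (fun n => mul_nonneg (hf n) poissonPMFReal_nonneg) h.summable]
    exact ENNReal.ofReal_lt_top

lemma poisson_integral_of_hasSum (r : ℝ≥0) (f : ℕ → ℝ) (hf : ∀ n, 0 ≤ f n) {c : ℝ}
    (h : HasSum (fun n => f n * poissonPMFReal r n) c) :
    ∫ n, f n ∂(poissonMeasure r) = c := by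
  rw [integral_poissonMeasure' (poisson_integrable_of_hasSum r f hf h)]
  rw [← h.tsum_eq]
  apply tsum_congr
  intro n
  have : (poissonPMF r n).toReal = poissonPMFReal r n := by
    have : poissonPMF r n = ENNReal.ofReal (poissonPMFReal r n) := rfl
    rw [this, ENNReal.toReal_ofReal poissonPMFReal_nonneg]
  rw [smul_eq_mul, mul_comm]; rfl

lemma poisson_integrable_pow (r : ℝ≥0) (k : ℕ) (hk : k ≤ 4) :
    Integrable (fun n : ℕ => (n:ℝ)^k) (poissonMeasure r) :=
  poisson_integrable_of_hasSum r _ (fun n => by positivity) (poisson_hasSum_pow r k hk)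

lemma poisson_integral_pow (r : ℝ≥0) (k : ℕ) (hk : k ≤ 4) :
    ∫ n, (n:ℝ)^k ∂(poissonMeasure r) = myMom k (r:ℝ) :=
  poisson_integral_of_hasSum r _ (fun n => by positivity) (poisson_hasSum_pow r k hk)

/-- With `V_{u,i} ~ Poisson(m·P_{u,i})`, `Y_{u,i} ~ Poisson(m·Q_{u,i})`
mutually independent, the variance of
`G_{u,i} = (V_{u,i} − Y_{u,i})² − V_{u,i} − Y_{u,i}` equals
`4·m³·(P_{u,i} − Q_{u,i})²·(P_{u,i} + Q_{u,i}) + 2·m²·(P_{u,i} + Q_{u,i})²`. -/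
theorem stmt7 (U n m : ℕ) (hU : 1 ≤ U) (hn : 1 ≤ n) (hm : 1 ≤ m)
    (P Q : Fin U → Fin n → ℝ≥0)
    (hP : ∀ u, ∑ i, P u i = 1) (hQ : ∀ u, ∑ i, Q u i = 1)
    {Ω : Type*} [MeasurableSpace Ω] (μ : Measure Ω) [IsProbabilityMeasure μ]
    (V Y : Fin U → Fin n → Ω → ℕ)
    (hVmeas : ∀ u i, Measurable (V u i)) (hYmeas : ∀ u i, Measurable (Y u i))
    (hVdist : ∀ u i, μ.map (V u i) = poissonMeasure (m * P u i))
    (hYdist : ∀ u i, μ.map (Y u i) = poissonMeasure (m * Q u i))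
    (hindep : iIndepFun
      (fun p : Fin U × Fin n × Bool =>
        if p.2.2 then V p.1 p.2.1 else Y p.1 p.2.1) μ)
    (u : Fin U) (i : Fin n) :
    variance
        (fun ω => (((V u i ω : ℝ) - (Y u i ω : ℝ)) ^ 2 - (V u i ω : ℝ) - (Y u i ω : ℝ))) μ =
      4 * (m : ℝ) ^ 3 * ((P u i : ℝ) - (Q u i : ℝ)) ^ 2 * ((P u i : ℝ) + (Q u i : ℝ)) +
        2 * (m : ℝ) ^ 2 * ((P u i : ℝ) + (Q u i : ℝ)) ^ 2 := by
  have hXm := hVmeas u i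
  have hWm := hYmeas u i
  set la : ℝ≥0 := m * P u i with hla
  set nb : ℝ≥0 := m * Q u i with hnb
  have hmapX : μ.map (V u i) = poissonMeasure la := hVdist u i
  have hmapW : μ.map (Y u i) = poissonMeasure nb := hYdist u i
  -- moments of V
  have hXint : ∀ k, k ≤ 4 → Integrable (fun ω => (V u i ω : ℝ)^k) μ := by
    intro k hk
    have h := (integrable_map_measure (μ := μ)
      (measurable_from_nat (f := fun j : ℕ => (j:ℝ)^k)).aestronglyMeasurable
      hXm.aemeasurable).mp
    rw [hmapX] at h
    exact h (poisson_integrable_pow la k hk)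
  have hWint : ∀ k, k ≤ 4 → Integrable (fun ω => (Y u i ω : ℝ)^k) μ := by
    intro k hk
    have h := (integrable_map_measure (μ := μ)
      (measurable_from_nat (f := fun j : ℕ => (j:ℝ)^k)).aestronglyMeasurable
      hWm.aemeasurable).mp
    rw [hmapW] at h
    exact h (poisson_integrable_pow nb k hk)
  have hXeq : ∀ k, k ≤ 4 → ∫ ω, (V u i ω : ℝ)^k ∂μ = myMom k (la:ℝ) := by
    intro k hk
    have h := integral_map (μ := μ) (φ := V u i) hXm.aemeasurable
      (f := fun j : ℕ => (j:ℝ)^k) (measurable_from_nat).aestronglyMeasurable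
    rw [hmapX, poisson_integral_pow la k hk] at h
    exact h.symm
  have hWeq : ∀ k, k ≤ 4 → ∫ ω, (Y u i ω : ℝ)^k ∂μ = myMom k (nb:ℝ) := by
    intro k hk
    have h := integral_map (μ := μ) (φ := Y u i) hWm.aemeasurable
      (f := fun j : ℕ => (j:ℝ)^k) (measurable_from_nat).aestronglyMeasurable
    rw [hmapW, poisson_integral_pow nb k hk] at h
    exact h.symm
  -- independence
  have hXW : IndepFun (V u i) (Y u i) μ := by
    have h := hindep.indepFun (i := (u, i, true)) (j := (u, i, false)) (by simp)
    simpa using h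
  have hIndPow : ∀ a b : ℕ, IndepFun (fun ω => (V u i ω : ℝ)^a)
      (fun ω => (Y u i ω : ℝ)^b) μ := by
    intro a b
    exact hXW.comp (φ := fun j : ℕ => (j:ℝ)^a) (ψ := fun j : ℕ => (j:ℝ)^b)
      measurable_from_nat measurable_from_nat
  have hMint : ∀ a b : ℕ, a ≤ 4 → b ≤ 4 →
      Integrable (fun ω => (V u i ω : ℝ)^a * (Y u i ω : ℝ)^b) μ := by
    intro a b ha hb
    exact (hIndPow a b).integrable_mul (hXint a ha) (hWint b hb)
  have hMeq : ∀ a b : ℕ, a ≤ 4 → b ≤ 4 →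
      ∫ ω, (V u i ω : ℝ)^a * (Y u i ω : ℝ)^b ∂μ = myMom a (la:ℝ) * myMom b (nb:ℝ) := by
    intro a b ha hb
    have h := (hIndPow a b).integral_mul_eq_mul_integral (hXint a ha).1 (hWint b hb).1
    have h2 : ∫ ω, (V u i ω : ℝ)^a * (Y u i ω : ℝ)^b ∂μ
        = (∫ ω, (V u i ω : ℝ)^a ∂μ) * ∫ ω, (Y u i ω : ℝ)^b ∂μ := h
    rw [h2, hXeq a ha, hWeq b hb]
  -- generic pair helpers
  have pairMono : ∀ a b : ℕ, a ≤ 4 → b ≤ 4 → ∀ c : ℝ,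
      Integrable (fun ω => c * ((V u i ω : ℝ)^a * (Y u i ω : ℝ)^b)) μ ∧
      ∫ ω, c * ((V u i ω : ℝ)^a * (Y u i ω : ℝ)^b) ∂μ
        = c * (myMom a (la:ℝ) * myMom b (nb:ℝ)) := by
    intro a b ha hb c
    refine ⟨(hMint a b ha hb).const_mul c, ?_⟩
    rw [MeasureTheory.integral_const_mul, hMeq a b ha hb]
  have pairAdd : ∀ {f g : Ω → ℝ} {x y : ℝ},
      (Integrable f μ ∧ ∫ ω, f ω ∂μ = x) → (Integrable g μ ∧ ∫ ω, g ω ∂μ = y) →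
      Integrable (fun ω => f ω + g ω) μ ∧ ∫ ω, (f ω + g ω) ∂μ = x + y := by
    intro f g x y hf hg
    exact ⟨hf.1.add hg.1, by rw [integral_add hf.1 hg.1, hf.2, hg.2]⟩
  -- expectation of f
  have e4 := (pairMono 0 1 (by norm_num) (by norm_num) (-1:ℝ))
  have e3 := pairAdd (pairMono 1 0 (by norm_num) (by norm_num) (-1:ℝ)) e4
  have e2 := pairAdd (pairMono 0 2 (by norm_num) (by norm_num) (1:ℝ)) e3
  have e1 := pairAdd (pairMono 1 1 (by norm_num) (by norm_num) (-2:ℝ)) e2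
  have e0 := pairAdd (pairMono 2 0 (by norm_num) (by norm_num) (1:ℝ)) e1
  have hrep1 : (fun ω => (((V u i ω : ℝ) - (Y u i ω : ℝ)) ^ 2 - (V u i ω : ℝ) - (Y u i ω : ℝ)))
      = (fun ω => (1:ℝ) * ((V u i ω : ℝ)^2 * (Y u i ω : ℝ)^0) + ((-2:ℝ) * ((V u i ω : ℝ)^1 * (Y u i ω : ℝ)^1) + ((1:ℝ) * ((V u i ω : ℝ)^0 * (Y u i ω : ℝ)^2) + ((-1:ℝ) * ((V u i ω : ℝ)^1 * (Y u i ω : ℝ)^0) + ((-1:ℝ) * ((V u i ω : ℝ)^0 * (Y u i ω : ℝ)^1)))))) := by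
    funext ω; ring
  -- expectation of f^2
  have s11 := (pairMono 4 0 (by norm_num) (by norm_num) (1:ℝ))
  have s10 := pairAdd (pairMono 3 1 (by norm_num) (by norm_num) (-4:ℝ)) s11
  have s9 := pairAdd (pairMono 3 0 (by norm_num) (by norm_num) (-2:ℝ)) s10
  have s8 := pairAdd (pairMono 2 2 (by norm_num) (by norm_num) (6:ℝ)) s9
  have s7 := pairAdd (pairMono 2 1 (by norm_num) (by norm_num) (2:ℝ)) s8
  have s6 := pairAdd (pairMono 2 0 (by norm_num) (by norm_num) (1:ℝ)) s7
  have s5 := pairAdd (pairMono 1 3 (by norm_num) (by norm_num) (-4:ℝ)) s6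
  have s4 := pairAdd (pairMono 1 2 (by norm_num) (by norm_num) (2:ℝ)) s5
  have s3 := pairAdd (pairMono 1 1 (by norm_num) (by norm_num) (2:ℝ)) s4
  have s2 := pairAdd (pairMono 0 4 (by norm_num) (by norm_num) (1:ℝ)) s3
  have s1 := pairAdd (pairMono 0 3 (by norm_num) (by norm_num) (-2:ℝ)) s2
  have s0 := pairAdd (pairMono 0 2 (by norm_num) (by norm_num) (1:ℝ)) s1
  have hrep2 : (fun ω => ((((V u i ω : ℝ) - (Y u i ω : ℝ)) ^ 2 - (V u i ω : ℝ) - (Y u i ω : ℝ)))^2)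
      = (fun ω => (1:ℝ) * ((V u i ω : ℝ)^0 * (Y u i ω : ℝ)^2) + ((-2:ℝ) * ((V u i ω : ℝ)^0 * (Y u i ω : ℝ)^3) + ((1:ℝ) * ((V u i ω : ℝ)^0 * (Y u i ω : ℝ)^4) + ((2:ℝ) * ((V u i ω : ℝ)^1 * (Y u i ω : ℝ)^1) + ((2:ℝ) * ((V u i ω : ℝ)^1 * (Y u i ω : ℝ)^2) + ((-4:ℝ) * ((V u i ω : ℝ)^1 * (Y u i ω : ℝ)^3) + ((1:ℝ) * ((V u i ω : ℝ)^2 * (Y u i ω : ℝ)^0) + ((2:ℝ) * ((V u i ω : ℝ)^2 * (Y u i ω : ℝ)^1) + ((6:ℝ) * ((V u i ω : ℝ)^2 * (Y u i ω : ℝ)^2) + ((-2:ℝ) * ((V u i ω : ℝ)^3 * (Y u i ω : ℝ)^0) + ((-4:ℝ) * ((V u i ω : ℝ)^3 * (Y u i ω : ℝ)^1) + ((1:ℝ) * ((V u i ω : ℝ)^4 * (Y u i ω : ℝ)^0))))))))))))) := by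
    funext ω; ring
  -- measurability of f
  have hXr : Measurable (fun ω => (V u i ω : ℝ)) :=
    (measurable_from_nat (f := (Nat.cast : ℕ → ℝ))).comp hXm
  have hWr : Measurable (fun ω => (Y u i ω : ℝ)) :=
    (measurable_from_nat (f := (Nat.cast : ℕ → ℝ))).comp hWm
  have hfmeas : AEStronglyMeasurable
      (fun ω => (((V u i ω : ℝ) - (Y u i ω : ℝ)) ^ 2 - (V u i ω : ℝ) - (Y u i ω : ℝ))) μ :=
    ((((hXr.sub hWr).pow_const 2).sub hXr).sub hWr).aestronglyMeasurable
  have hint2 : Integrable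
      (fun ω => ((((V u i ω : ℝ) - (Y u i ω : ℝ)) ^ 2 - (V u i ω : ℝ) - (Y u i ω : ℝ)))^2) μ := by
    rw [hrep2]; exact s0.1
  have hmem : MemLp (fun ω => (((V u i ω : ℝ) - (Y u i ω : ℝ)) ^ 2 - (V u i ω : ℝ)
      - (Y u i ω : ℝ))) 2 μ :=
    (memLp_two_iff_integrable_sq hfmeas).mpr hint2
  have hval1 : ∫ ω, (((V u i ω : ℝ) - (Y u i ω : ℝ)) ^ 2 - (V u i ω : ℝ) - (Y u i ω : ℝ)) ∂μ
      = (1:ℝ) * (myMom 2 (la:ℝ) * myMom 0 (nb:ℝ)) + ((-2:ℝ) * (myMom 1 (la:ℝ) * myMom 1 (nb:ℝ)) + ((1:ℝ) * (myMom 0 (la:ℝ) * myMom 2 (nb:ℝ)) + ((-1:ℝ) * (myMom 1 (la:ℝ) * myMom 0 (nb:ℝ)) + ((-1:ℝ) * (myMom 0 (la:ℝ) * myMom 1 (nb:ℝ)))))) := by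
    rw [hrep1]; exact e0.2
  have hval2 : ∫ ω, ((((V u i ω : ℝ) - (Y u i ω : ℝ)) ^ 2 - (V u i ω : ℝ)
      - (Y u i ω : ℝ)))^2 ∂μ = (1:ℝ) * (myMom 0 (la:ℝ) * myMom 2 (nb:ℝ)) + ((-2:ℝ) * (myMom 0 (la:ℝ) * myMom 3 (nb:ℝ)) + ((1:ℝ) * (myMom 0 (la:ℝ) * myMom 4 (nb:ℝ)) + ((2:ℝ) * (myMom 1 (la:ℝ) * myMom 1 (nb:ℝ)) + ((2:ℝ) * (myMom 1 (la:ℝ) * myMom 2 (nb:ℝ)) + ((-4:ℝ) * (myMom 1 (la:ℝ) * myMom 3 (nb:ℝ)) + ((1:ℝ) * (myMom 2 (la:ℝ) * myMom 0 (nb:ℝ)) + ((2:ℝ) * (myMom 2 (la:ℝ) * myMom 1 (nb:ℝ)) + ((6:ℝ) * (myMom 2 (la:ℝ) * myMom 2 (nb:ℝ)) + ((-2:ℝ) * (myMom 3 (la:ℝ) * myMom 0 (nb:ℝ)) + ((-4:ℝ) * (myMom 3 (la:ℝ) * myMom 1 (nb:ℝ)) + ((1:ℝ) * (myMom 4 (la:ℝ)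 * myMom 0 (nb:ℝ))))))))))))) := by
    rw [hrep2]; exact s0.2
  rw [variance_eq_sub hmem]
  simp only [Pi.pow_apply]
  rw [hval2, hval1]
  simp only [myMom, hla, hnb, NNReal.coe_mul, NNReal.coe_natCast]
  ring
end

section
/- Let δ₁ ∈ (0,1) and suppose c₁ > 0 is a constant such that E[f̂_{u,i}] ≤ c₁ · f_{u,i} for all u ∈ [U] and i ∈ [n]. Then with probability at least 1 − δ₁ over the randomness of (Ṽ_{u,i}, Ỹ_{u,i}), the conditional expectation of G given the f̂_{u,i} satisfies E[ G | f̂_{u,i}, u ∈ [U], i ∈ [n] ] ≥ δ₁ · m² · ( ∑_{u=1}^U ‖P_u − Q_u‖₁ )² / ( c₁ · ∑_{u=1}^U ∑_{i=1}^n f_{u,i} ). -/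
open MeasureTheory ProbabilityTheory NNReal

/-- The deterministic normalizing quantity `f_{u,i}` (with `p = P_{u,i}`, `q = Q_{u,i}`):
`max{√(mn)·|p−q|, n·(p+q), 1}` if `m > n`, and `max{m·(p+q), 1}` otherwise. -/
noncomputable def fui (m n : ℕ) (p q : ℝ) : ℝ :=
  if n < m then max (max (Real.sqrt (m * n) * |p - q|) ((n : ℝ) * (p + q))) 1
  else max ((m : ℝ) * (p + q)) 1

/-- The empirical estimate `f̂_{u,i}`, as a function of the counts `ṽ = Ṽ_{u,i}` and
`ỹ = Ỹ_{u,i}`: `max{|ṽ−ỹ|/√(m/n), (ṽ+ỹ)/(m/n), 1}` if `m > n`, and `max{ṽ+ỹ, 1}`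
otherwise. -/
noncomputable def fuiHat (m n : ℕ) (v y : ℕ) : ℝ :=
  if n < m then
    max (max (|(v : ℝ) - (y : ℝ)| / Real.sqrt ((m : ℝ) / n))
      (((v : ℝ) + (y : ℝ)) / ((m : ℝ) / n))) 1
  else max ((v : ℝ) + (y : ℝ)) 1

/-- `G_{u,i}` as a function of the counts `v = V_{u,i}` and `y = Y_{u,i}`:
`(v − y)² − v − y`. -/
def Gui (v y : ℕ) : ℝ := ((v : ℝ) - (y : ℝ)) ^ 2 - (v : ℝ) - (y : ℝ)


lemma pois_succ (r : ℝ≥0) (k : ℕ) :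
    ((k+1 : ℕ) : ℝ) * poissonPMFReal r (k+1) = r * poissonPMFReal r k := by
  unfold poissonPMFReal
  rw [Nat.factorial_succ]
  have h1 : ((k:ℝ) + 1) ≠ 0 := by positivity
  have h2 : (k.factorial : ℝ) ≠ 0 := by positivity
  push_cast
  field_simp
  ring

lemma pois_hasSum_id (r : ℝ≥0) :
    HasSum (fun k : ℕ => (k : ℝ) * poissonPMFReal r k) r := by
  have h := (poissonPMFRealSum r).mul_left (r : ℝ)
  rw [mul_one] at h
  have h0 : ∀ a ∉ Set.range Nat.succ,
      (fun k : ℕ => (k : ℝ) * poissonPMFReal r k) a = 0 := by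
    intro a ha
    have : a = 0 := by
      cases a with
      | zero => rfl
      | succ b => exact absurd ⟨b, rfl⟩ ha
    simp [this]
  rw [← Function.Injective.hasSum_iff Nat.succ_injective h0]
  convert h using 1
  · rfl
  funext k
  simpa [poissonPMFReal] using pois_succ r k

lemma pois_hasSum_sq (r : ℝ≥0) :
    HasSum (fun k : ℕ => (k : ℝ)^2 * poissonPMFReal r k) ((r:ℝ) + (r:ℝ)^2) := by
  have h2 : HasSum (fun k : ℕ => ((k:ℝ) * ((k:ℝ) - 1)) * poissonPMFReal r k) ((r:ℝ)^2) := by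
    have h := (pois_hasSum_id r).mul_left (r : ℝ)
    have h0 : ∀ a ∉ Set.range (fun k : ℕ => k + 1),
        (fun k : ℕ => ((k:ℝ) * ((k:ℝ) - 1)) * poissonPMFReal r k) a = 0 := by
      intro a ha
      have : a = 0 := by
        cases a with
        | zero => rfl
        | succ b => exact absurd ⟨b, rfl⟩ ha
      simp [this]
    have hinj : Function.Injective (fun k : ℕ => k + 1) := fun a b hab => by simpa using hab
    rw [← Function.Injective.hasSum_iff hinj h0]
    convert h using 1
    · rfl
    · funext k
      have := pois_succ r k
      push_cast at this ⊢
      simp only [Function.comp]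
      push_cast
      linear_combination (k:ℝ) * this
    · ring
  have := h2.add (pois_hasSum_id r)
  convert this using 1
  · funext k; ring
  · ring


lemma pois_meas_singleton (r : ℝ≥0) (k : ℕ) :
    poissonMeasure r {k} = ENNReal.ofReal (poissonPMFReal r k) :=
  by rw [poissonMeasure_singleton]; rfl

lemma pois_integrable {r : ℝ≥0} {f : ℕ → ℝ}
    (habs : Summable (fun k => |f k| * poissonPMFReal r k)) :
    Integrable f (poissonMeasure r) := by
  refine ⟨(measurable_from_top (f := f)).aestronglyMeasurable, ?_⟩
  rw [hasFiniteIntegral_iff_norm]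
  have : ∀ k : ℕ, ENNReal.ofReal ‖f k‖ * poissonMeasure r {k}
      = ENNReal.ofReal (|f k| * poissonPMFReal r k) := by
    intro k
    rw [pois_meas_singleton, Real.norm_eq_abs, ← ENNReal.ofReal_mul (abs_nonneg _)]
  rw [lintegral_countable']
  simp_rw [this]
  rw [← ENNReal.ofReal_tsum_of_nonneg (fun k => mul_nonneg (abs_nonneg _) poissonPMFReal_nonneg) habs]
  exact ENNReal.ofReal_lt_top

lemma pois_integral {r : ℝ≥0} {f : ℕ → ℝ} {s : ℝ}
    (hsum : HasSum (fun k => f k * poissonPMFReal r k) s)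
    (habs : Summable (fun k => |f k| * poissonPMFReal r k)) :
    ∫ k, f k ∂(poissonMeasure r) = s := by
  have hPo : poissonMeasure r = (poissonPMF r).toMeasure :=
      Measure.ext_iff_singleton.mpr fun k => by
        rw [pois_meas_singleton, PMF.toMeasure_apply_singleton _ _ (MeasurableSet.singleton k),
          poissonPMFReal_ofReal_eq_poissonPMF]
  rw [hPo,
    PMF.integral_eq_tsum _ f (hPo ▸ pois_integrable habs)]
  rw [← hsum.tsum_eq]
  congr 1
  funext k
  have : ((poissonPMF r k).toReal) = poissonPMFReal r k := by
    rw [show poissonPMF r k = ENNReal.ofReal (poissonPMFReal r k) from rfl,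
      ENNReal.toReal_ofReal poissonPMFReal_nonneg]
  rw [this, smul_eq_mul, mul_comm]

section
variable {Ω : Type*} [MeasurableSpace Ω] {μ : Measure Ω}

lemma map_int (X : Ω → ℕ) (hX : Measurable X) (r : ℝ≥0) (hd : μ.map X = poissonMeasure r)
    (f : ℕ → ℝ) (hi : Integrable f (poissonMeasure r)) :
    Integrable (fun ω => f (X ω)) μ ∧
      ∫ ω, f (X ω) ∂μ = ∫ k, f k ∂(poissonMeasure r) := by
  rw [← hd] at hi ⊢
  constructor
  · exact (integrable_map_measure (measurable_from_top (f := f)).aestronglyMeasurable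
      hX.aemeasurable).mp hi
  · exact (integral_map hX.aemeasurable (measurable_from_top (f := f)).aestronglyMeasurable).symm
end

lemma one_le_fui (m n : ℕ) (p q : ℝ) : 1 ≤ fui m n p q := by
  unfold fui; split
  · exact le_max_right _ _
  · exact le_max_right _ _

lemma one_le_fuiHat (m n v y : ℕ) : 1 ≤ fuiHat m n v y := by
  unfold fuiHat; split
  · exact le_max_right _ _
  · exact le_max_right _ _

lemma fuiHat_le (m n v y : ℕ) (hn : 1 ≤ n) : fuiHat m n v y ≤ (v:ℝ) + (y:ℝ) + 1 := by
  have hv : (0:ℝ) ≤ v := Nat.cast_nonneg v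
  have hy : (0:ℝ) ≤ y := Nat.cast_nonneg y
  unfold fuiHat; split
  case isTrue h =>
    have hn' : (0:ℝ) < n := by positivity
    have h1 : (1:ℝ) ≤ (m:ℝ)/n := by
      rw [le_div_iff₀ hn']
      have : (n:ℝ) ≤ m := by exact_mod_cast h.le
      linarith
    have hs : (1:ℝ) ≤ Real.sqrt ((m:ℝ)/n) := by
      rw [show (1:ℝ) = Real.sqrt 1 from (Real.sqrt_one).symm]
      exact Real.sqrt_le_sqrt h1
    have habs : |(v:ℝ) - y| ≤ (v:ℝ) + y := by
      rw [abs_le]; constructor <;> linarith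
    apply max_le (max_le ?_ ?_) (by linarith)
    · calc |(v:ℝ) - y| / Real.sqrt ((m:ℝ)/n) ≤ |(v:ℝ) - y| :=
        div_le_self (abs_nonneg _) hs
      _ ≤ (v:ℝ) + y + 1 := by linarith
    · calc ((v:ℝ) + y) / ((m:ℝ)/n) ≤ (v:ℝ) + y := div_le_self (by linarith) h1
      _ ≤ (v:ℝ) + y + 1 := by linarith
  case isFalse h => exact max_le (by linarith) (by linarith)

lemma meas_fuiHat {Ω : Type*} [MeasurableSpace Ω] (m n : ℕ) {V' Y' : Ω → ℕ}
    (hV' : Measurable V') (hY' : Measurable Y') :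
    Measurable (fun ω => fuiHat m n (V' ω) (Y' ω)) := by
  have mv : Measurable fun ω => (V' ω : ℝ) :=
    (measurable_of_countable (fun k : ℕ => (k : ℝ))).comp hV'
  have my : Measurable fun ω => (Y' ω : ℝ) :=
    (measurable_of_countable (fun k : ℕ => (k : ℝ))).comp hY'
  unfold fuiHat
  split
  · exact (((mv.sub my).abs.div_const _).max ((mv.add my).div_const _)).max measurable_const
  · exact (mv.add my).max measurable_const

lemma habs_id (r : ℝ≥0) : Summable (fun k : ℕ => |(k:ℝ)| * poissonPMFReal r k) := by
  have := (pois_hasSum_id r).summable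
  refine this.congr fun k => ?_
  rw [abs_of_nonneg (Nat.cast_nonneg k)]

lemma habs_sq (r : ℝ≥0) : Summable (fun k : ℕ => |(k:ℝ)^2| * poissonPMFReal r k) := by
  have := (pois_hasSum_sq r).summable
  refine this.congr fun k => ?_
  rw [abs_of_nonneg (sq_nonneg _)]

section
variable {Ω : Type*} [MeasurableSpace Ω] {μ : Measure Ω}

lemma moments (X : Ω → ℕ) (hX : Measurable X) (r : ℝ≥0) (hd : μ.map X = poissonMeasure r) :
    Integrable (fun ω => (X ω : ℝ)) μ ∧ Integrable (fun ω => (X ω : ℝ)^2) μ ∧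
      (∫ ω, (X ω : ℝ) ∂μ) = r ∧ (∫ ω, (X ω : ℝ)^2 ∂μ) = (r:ℝ) + (r:ℝ)^2 := by
  have h1 := map_int X hX r hd (fun k => (k:ℝ)) (pois_integrable (habs_id r))
  have h2 := map_int X hX r hd (fun k => (k:ℝ)^2) (pois_integrable (habs_sq r))
  exact ⟨h1.1, h2.1,
    h1.2.trans (pois_integral (pois_hasSum_id r) (habs_id r)),
    h2.2.trans (pois_integral (pois_hasSum_sq r) (habs_sq r))⟩

/-- Expected value of `Gui` for independent Poissons. -/
lemma exp_Gui (X Y : Ω → ℕ) (hX : Measurable X) (hY : Measurable Y)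
    (a b : ℝ≥0) (hda : μ.map X = poissonMeasure a) (hdb : μ.map Y = poissonMeasure b)
    (hind : IndepFun X Y μ) :
    ∫ ω, Gui (X ω) (Y ω) ∂μ = ((a:ℝ) - (b:ℝ))^2 := by
  obtain ⟨iX, iX2, eX, eX2⟩ := moments X hX a hda
  obtain ⟨iY, iY2, eY, eY2⟩ := moments Y hY b hdb
  have hindR : IndepFun (fun ω => (X ω : ℝ)) (fun ω => (Y ω : ℝ)) μ :=
    hind.comp measurable_from_top measurable_from_top
  have iXY : Integrable (fun ω => (X ω : ℝ) * (Y ω : ℝ)) μ := hindR.integrable_mul iX iY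
  have eXY : ∫ ω, (X ω : ℝ) * (Y ω : ℝ) ∂μ = (a:ℝ) * (b:ℝ) := by
    have h := hindR.integral_fun_mul_eq_mul_integral iX.aestronglyMeasurable iY.aestronglyMeasurable
    rw [eX, eY] at h
    exact h
  have hG : (fun ω => Gui (X ω) (Y ω)) =
      fun ω => (X ω : ℝ)^2 + (Y ω : ℝ)^2 - 2 * ((X ω : ℝ) * (Y ω : ℝ)) - (X ω : ℝ) - (Y ω : ℝ) := by
    funext ω; unfold Gui; ring
  have iS : Integrable (fun ω => (X ω : ℝ)^2 + (Y ω : ℝ)^2) μ := iX2.add iY2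
  have iM : Integrable (fun ω => 2 * ((X ω : ℝ) * (Y ω : ℝ))) μ := iXY.const_mul 2
  have i1 : Integrable (fun ω => (X ω : ℝ)^2 + (Y ω : ℝ)^2 - 2 * ((X ω : ℝ) * (Y ω : ℝ))) μ :=
    iS.sub iM
  have i2 : Integrable (fun ω => (X ω : ℝ)^2 + (Y ω : ℝ)^2 - 2 * ((X ω : ℝ) * (Y ω : ℝ))
      - (X ω : ℝ)) μ := i1.sub iX
  rw [hG, integral_sub i2 iY, integral_sub i1 iX, integral_sub iS iM,
    integral_add iX2 iY2, MeasureTheory.integral_const_mul, eX2, eY2, eXY, eX, eY]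
  ring
end

set_option maxHeartbeats 1000000 in
/-- Let `δ₁ ∈ (0,1)` and `c₁ > 0` with `E[f̂_{u,i}] ≤ c₁·f_{u,i}` for all
`u, i`. Then with probability at least `1 − δ₁` over the randomness of `(Ṽ, Ỹ)`, the
conditional expectation `E[G | f̂] = ∑_{u,i} E[G_{u,i}]/f̂_{u,i}` satisfies
`E[G | f̂] ≥ δ₁·m²·(∑_u ‖P_u − Q_u‖₁)² / (c₁·∑_{u,i} f_{u,i})`. -/
theorem stmt8 (U n m : ℕ) (hU : 1 ≤ U) (hn : 1 ≤ n) (hm : 1 ≤ m)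
    (P Q : Fin U → Fin n → ℝ≥0)
    (hP : ∀ u, ∑ i, P u i = 1) (hQ : ∀ u, ∑ i, Q u i = 1)
    {Ω : Type*} [MeasurableSpace Ω] (μ : Measure Ω) [IsProbabilityMeasure μ]
    (V Y V' Y' : Fin U → Fin n → Ω → ℕ)
    (hVmeas : ∀ u i, Measurable (V u i)) (hYmeas : ∀ u i, Measurable (Y u i))
    (hV'meas : ∀ u i, Measurable (V' u i)) (hY'meas : ∀ u i, Measurable (Y' u i))
    (hVdist : ∀ u i, μ.map (V u i) = poissonMeasure (m * P u i))
    (hYdist : ∀ u i, μ.map (Y u i) = poissonMeasure (m * Q u i))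
    (hV'dist : ∀ u i, μ.map (V' u i) = poissonMeasure (m * P u i))
    (hY'dist : ∀ u i, μ.map (Y' u i) = poissonMeasure (m * Q u i))
    (hindep : iIndepFun
      (fun p : (Fin U × Fin n) × Fin 4 =>
        ![V p.1.1 p.1.2, Y p.1.1 p.1.2, V' p.1.1 p.1.2, Y' p.1.1 p.1.2] p.2) μ)
    (δ₁ : ℝ) (hδ₁ : 0 < δ₁) (hδ₁' : δ₁ < 1)
    (c₁ : ℝ) (hc₁ : 0 < c₁)
    (hc₁bound : ∀ u i, ∫ ω, fuiHat m n (V' u i ω) (Y' u i ω) ∂μ ≤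
      c₁ * fui m n (P u i) (Q u i)) :
    ENNReal.ofReal (1 - δ₁) ≤
      μ {ω | δ₁ * (m : ℝ) ^ 2 * (∑ u, ∑ i, |(P u i : ℝ) - (Q u i : ℝ)|) ^ 2 /
          (c₁ * ∑ u, ∑ i, fui m n (P u i) (Q u i)) ≤
        ∑ u, ∑ i, (∫ ω', Gui (V u i ω') (Y u i ω') ∂μ) /
          fuiHat m n (V' u i ω) (Y' u i ω)} := by
  classical
  obtain ⟨T, hT⟩ : ∃ T : ℝ, T = ∑ u, ∑ i, |(P u i : ℝ) - (Q u i : ℝ)| := ⟨_, rfl⟩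
  obtain ⟨F, hF⟩ : ∃ F : ℝ, F = ∑ u, ∑ i, fui m n (P u i) (Q u i) := ⟨_, rfl⟩
  obtain ⟨S, hS⟩ : ∃ S : Ω → ℝ,
      S = fun ω => ∑ u, ∑ i, fuiHat m n (V' u i ω) (Y' u i ω) := ⟨_, rfl⟩
  rw [← hT, ← hF]
  -- basic positivity
  have hF1 : (1:ℝ) ≤ F := by
    rw [hF]
    have h0 : ∀ u : Fin U, (1:ℝ) ≤ ∑ i, fui m n (P u i) (Q u i) := by
      intro u
      refine le_trans (one_le_fui m n (P u ⟨0, hn⟩) (Q u ⟨0, hn⟩)) ?_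
      exact Finset.single_le_sum (f := fun i => fui m n (P u i) (Q u i))
        (fun i _ => le_trans zero_le_one (one_le_fui m n _ _)) (Finset.mem_univ _)
    refine le_trans (h0 ⟨0, hU⟩) ?_
    exact Finset.single_le_sum (f := fun u => ∑ i, fui m n (P u i) (Q u i))
      (fun u _ => le_trans zero_le_one (h0 u)) (Finset.mem_univ _)
  have hB : (0:ℝ) < c₁ * F := by nlinarith
  -- value of the inner expectations
  have hEG : ∀ u i, (∫ ω', Gui (V u i ω') (Y u i ω') ∂μ)
      = (m:ℝ)^2 * ((P u i : ℝ) - (Q u i : ℝ))^2 := by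
    intro u i
    have hne : (((u,i),(0:Fin 4)) : (Fin U × Fin n) × Fin 4) ≠ ((u,i),(1:Fin 4)) := by
      simp [Prod.ext_iff]
    have hind : IndepFun (V u i) (Y u i) μ := by
      have h := hindep.indepFun hne
      simpa using h
    rw [exp_Gui (V u i) (Y u i) (hVmeas u i) (hYmeas u i) _ _ (hVdist u i) (hYdist u i) hind]
    push_cast
    ring
  -- integrability of the fuiHat terms
  have hIf : ∀ u i, Integrable (fun ω => fuiHat m n (V' u i ω) (Y' u i ω)) μ := by
    intro u i
    have h1 := (moments (V' u i) (hV'meas u i) _ (hV'dist u i)).1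
    have h2 := (moments (Y' u i) (hY'meas u i) _ (hY'dist u i)).1
    refine Integrable.mono' ((h1.add h2).add (integrable_const 1)) ?_ ?_
    · exact (meas_fuiHat m n (hV'meas u i) (hY'meas u i)).aestronglyMeasurable
    · refine ae_of_all _ fun ω => ?_
      rw [Real.norm_eq_abs, abs_of_nonneg (le_trans zero_le_one (one_le_fuiHat _ _ _ _))]
      exact fuiHat_le m n _ _ hn
  have hSint : Integrable S μ := by
    rw [hS]
    exact integrable_finset_sum _ fun u _ => integrable_finset_sum _ fun i _ => hIf u i
  have hSmeas : Measurable S := by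
    rw [hS]
    refine Finset.measurable_sum _ fun u _ => Finset.measurable_sum _ fun i _ => ?_
    exact meas_fuiHat m n (hV'meas u i) (hY'meas u i)
  have hS1 : ∀ ω, (1:ℝ) ≤ S ω := by
    intro ω
    rw [hS]
    have h0 : ∀ u : Fin U, (1:ℝ) ≤ ∑ i, fuiHat m n (V' u i ω) (Y' u i ω) := by
      intro u
      refine le_trans (one_le_fuiHat m n (V' u ⟨0, hn⟩ ω) (Y' u ⟨0, hn⟩ ω)) ?_
      exact Finset.single_le_sum (f := fun i => fuiHat m n (V' u i ω) (Y' u i ω))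
        (fun i _ => le_trans zero_le_one (one_le_fuiHat m n _ _)) (Finset.mem_univ _)
    refine le_trans (h0 ⟨0, hU⟩) ?_
    exact Finset.single_le_sum (f := fun u => ∑ i, fuiHat m n (V' u i ω) (Y' u i ω))
      (fun u _ => le_trans zero_le_one (h0 u)) (Finset.mem_univ _)
  -- expectation of S
  have hES : ∫ ω, S ω ∂μ ≤ c₁ * F := by
    rw [hS, hF]
    rw [integral_finset_sum _ (fun u _ => integrable_finset_sum _ fun i _ => hIf u i)]
    rw [Finset.mul_sum]
    refine Finset.sum_le_sum fun u _ => ?_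
    rw [integral_finset_sum _ (fun i _ => hIf u i), Finset.mul_sum]
    exact Finset.sum_le_sum fun i _ => hc₁bound u i
  -- Markov's inequality
  have hmark := mul_meas_ge_le_integral_of_nonneg
    (ae_of_all μ (fun ω => le_trans zero_le_one (hS1 ω))) hSint (c₁ * F / δ₁)
  have htr : (μ {x | c₁ * F / δ₁ ≤ S x}).toReal ≤ δ₁ := by
    have h3 : c₁ * F / δ₁ * (μ {x | c₁ * F / δ₁ ≤ S x}).toReal ≤ c₁ * F :=
      hmark.trans hES
    rw [div_mul_eq_mul_div, div_le_iff₀ hδ₁] at h3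
    exact le_of_mul_le_mul_left h3 hB
  have hμc : μ {x | c₁ * F / δ₁ ≤ S x} ≤ ENNReal.ofReal δ₁ := by
    rw [← ENNReal.le_ofReal_iff_toReal_le (measure_ne_top μ _) hδ₁.le] at htr
    exact htr
  have hmeasset : MeasurableSet {x | c₁ * F / δ₁ ≤ S x} :=
    measurableSet_le measurable_const hSmeas
  -- the good event
  have hsub : {x | c₁ * F / δ₁ ≤ S x}ᶜ ⊆
      {ω | δ₁ * (m : ℝ) ^ 2 * T ^ 2 / (c₁ * F) ≤
        ∑ u, ∑ i, (∫ ω', Gui (V u i ω') (Y u i ω') ∂μ) /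
          fuiHat m n (V' u i ω) (Y' u i ω)} := by
    intro ω hω
    simp only [Set.mem_compl_iff, Set.mem_setOf_eq, not_le] at hω
    simp only [Set.mem_setOf_eq]
    have hgpos : ∀ u i, (0:ℝ) < fuiHat m n (V' u i ω) (Y' u i ω) :=
      fun u i => lt_of_lt_of_le zero_lt_one (one_le_fuiHat m n _ _)
    have hSpos : (0:ℝ) < S ω := lt_of_lt_of_le zero_lt_one (hS1 ω)
    -- Cauchy-Schwarz (Sedrakyan)
    have hCS : ((m:ℝ) * T)^2 / S ω ≤
        ∑ u, ∑ i, (m:ℝ)^2 * ((P u i : ℝ) - (Q u i : ℝ))^2 /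
          fuiHat m n (V' u i ω) (Y' u i ω) := by
      have h := Finset.sq_sum_div_le_sum_sq_div (Finset.univ : Finset (Fin U × Fin n))
        (fun p => (m:ℝ) * |(P p.1 p.2 : ℝ) - (Q p.1 p.2 : ℝ)|)
        (g := fun p => fuiHat m n (V' p.1 p.2 ω) (Y' p.1 p.2 ω))
        (fun p _ => hgpos p.1 p.2)
      rw [Fintype.sum_prod_type, Fintype.sum_prod_type, Fintype.sum_prod_type] at h
      calc ((m:ℝ) * T)^2 / S ω
          = (∑ u, ∑ i, (m:ℝ) * |(P u i : ℝ) - (Q u i : ℝ)|)^2 /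
            (∑ u, ∑ i, fuiHat m n (V' u i ω) (Y' u i ω)) := by
            rw [hT, hS]
            congr 2
            rw [Finset.mul_sum]
            refine Finset.sum_congr rfl fun u _ => ?_
            rw [Finset.mul_sum]
        _ ≤ ∑ u, ∑ i, ((m:ℝ) * |(P u i : ℝ) - (Q u i : ℝ)|)^2 /
            fuiHat m n (V' u i ω) (Y' u i ω) := h
        _ = ∑ u, ∑ i, (m:ℝ)^2 * ((P u i : ℝ) - (Q u i : ℝ))^2 /
            fuiHat m n (V' u i ω) (Y' u i ω) := by
            refine Finset.sum_congr rfl fun u _ => Finset.sum_congr rfl fun i _ => ?_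
            rw [mul_pow, sq_abs]
    have hstep : δ₁ * (m:ℝ)^2 * T^2 / (c₁ * F) ≤ ((m:ℝ) * T)^2 / S ω := by
      rw [div_le_div_iff₀ hB hSpos, mul_pow]
      have h4 : δ₁ * S ω ≤ c₁ * F := by
        calc δ₁ * S ω ≤ δ₁ * (c₁ * F / δ₁) := by nlinarith
          _ = c₁ * F := by field_simp
      nlinarith [sq_nonneg T, mul_le_mul_of_nonneg_left h4
        (mul_nonneg (sq_nonneg (m:ℝ)) (sq_nonneg T))]
    calc δ₁ * (m:ℝ)^2 * T^2 / (c₁ * F) ≤ ((m:ℝ) * T)^2 / S ω := hstep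
      _ ≤ ∑ u, ∑ i, (m:ℝ)^2 * ((P u i : ℝ) - (Q u i : ℝ))^2 /
          fuiHat m n (V' u i ω) (Y' u i ω) := hCS
      _ = ∑ u, ∑ i, (∫ ω', Gui (V u i ω') (Y u i ω') ∂μ) /
          fuiHat m n (V' u i ω) (Y' u i ω) := by
          refine Finset.sum_congr rfl fun u _ => Finset.sum_congr rfl fun i _ => ?_
          rw [hEG u i]
  -- conclude
  refine le_trans ?_ (measure_mono hsub)
  rw [prob_compl_eq_one_sub hmeasset]
  calc ENNReal.ofReal (1 - δ₁) = 1 - ENNReal.ofReal δ₁ := by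
        rw [ENNReal.ofReal_sub _ hδ₁.le, ENNReal.ofReal_one]
    _ ≤ 1 - μ {x | c₁ * F / δ₁ ≤ S x} := tsub_le_tsub_left hμc 1
end

section
/- If m > n, then ∑_{u=1}^U ∑_{i=1}^n Var(G_{u,i}) / f_{u,i}² ≤ 10·U·m²/n, where Var(G_{u,i}) = 4·m³·(P_{u,i}−Q_{u,i})²·(P_{u,i}+Q_{u,i}) + 2·m²·(P_{u,i}+Q_{u,i})². -/
open NNReal

/-- If `m > n`, then
`∑_{u,i} Var(G_{u,i}) / f_{u,i}² ≤ 10·U·m²/n`, where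
`Var(G_{u,i}) = 4·m³·(P−Q)²·(P+Q) + 2·m²·(P+Q)²`. -/
theorem stmt11 (U n m : ℕ) (hU : 1 ≤ U) (hn : 1 ≤ n) (hmn : n < m)
    (P Q : Fin U → Fin n → ℝ)
    (hP0 : ∀ u i, 0 ≤ P u i) (hQ0 : ∀ u i, 0 ≤ Q u i)
    (hP : ∀ u, ∑ i, P u i = 1) (hQ : ∀ u, ∑ i, Q u i = 1) :
    ∑ u, ∑ i,
        (4 * (m : ℝ) ^ 3 * (P u i - Q u i) ^ 2 * (P u i + Q u i) +
            2 * (m : ℝ) ^ 2 * (P u i + Q u i) ^ 2) /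
          (fui m n (P u i) (Q u i)) ^ 2 ≤
      10 * (U : ℝ) * (m : ℝ) ^ 2 / n := by
  have hnR : (0:ℝ) < n := by exact_mod_cast hn
  have hm0 : 0 < m := lt_of_le_of_lt (Nat.zero_le n) hmn
  have hmR : (0:ℝ) < m := by exact_mod_cast hm0
  have key : ∀ (p q : ℝ), 0 ≤ p → 0 ≤ q →
      (4 * (m : ℝ) ^ 3 * (p - q) ^ 2 * (p + q) + 2 * (m : ℝ) ^ 2 * (p + q) ^ 2) /
          (fui m n p q) ^ 2
        ≤ 4 * (m:ℝ)^2 * (p + q) / n + 2 * (m:ℝ)^2 / n^2 := by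
    intro p q hp hq
    rw [fui, if_pos hmn]
    set f := max (max (Real.sqrt (m * n) * |p - q|) ((n : ℝ) * (p + q))) 1 with hfdef
    have hf1 : (1:ℝ) ≤ f := le_max_right _ _
    have hfpos : (0:ℝ) < f := lt_of_lt_of_le one_pos hf1
    have hfd : Real.sqrt (m * n) * |p - q| ≤ f :=
      le_trans (le_max_left _ _) (le_max_left _ _)
    have hfs : (n : ℝ) * (p + q) ≤ f := le_trans (le_max_right _ _) (le_max_left _ _)
    have hmn0 : (0:ℝ) ≤ (m:ℝ) * n := by positivity
    have hsq : Real.sqrt ((m:ℝ) * n) ^ 2 = (m:ℝ) * n := Real.sq_sqrt hmn0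
    have h2 : (m:ℝ) * n * (p - q) ^ 2 ≤ f ^ 2 := by
      have h := mul_self_le_mul_self (by positivity) hfd
      nlinarith [sq_abs (p - q), Real.sqrt_nonneg ((m:ℝ) * n)]
    have h3 : (n:ℝ) ^ 2 * (p + q) ^ 2 ≤ f ^ 2 := by
      have h := mul_self_le_mul_self (by positivity : (0:ℝ) ≤ (n:ℝ) * (p + q)) hfs
      nlinarith
    have hA : 4 * (m : ℝ) ^ 3 * (p - q) ^ 2 * (p + q) / f ^ 2 ≤ 4 * (m:ℝ)^2 * (p + q) / n := by
      rw [div_le_div_iff₀ (by positivity) hnR]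
      nlinarith [mul_le_mul_of_nonneg_left h2 (show (0:ℝ) ≤ 4 * (m:ℝ)^2 * (p + q) by positivity)]
    have hB : 2 * (m : ℝ) ^ 2 * (p + q) ^ 2 / f ^ 2 ≤ 2 * (m:ℝ)^2 / n^2 := by
      rw [div_le_div_iff₀ (by positivity) (by positivity)]
      nlinarith [mul_le_mul_of_nonneg_left h3 (show (0:ℝ) ≤ 2 * (m:ℝ)^2 by positivity)]
    calc (4 * (m : ℝ) ^ 3 * (p - q) ^ 2 * (p + q) + 2 * (m : ℝ) ^ 2 * (p + q) ^ 2) / f ^ 2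
        = 4 * (m : ℝ) ^ 3 * (p - q) ^ 2 * (p + q) / f ^ 2
            + 2 * (m : ℝ) ^ 2 * (p + q) ^ 2 / f ^ 2 := by ring
      _ ≤ 4 * (m:ℝ)^2 * (p + q) / n + 2 * (m:ℝ)^2 / n^2 := add_le_add hA hB
  have per_u : ∀ u, ∑ i, (4 * (m:ℝ)^2 * (P u i + Q u i) / n + 2 * (m:ℝ)^2 / n^2)
      = 10 * (m:ℝ)^2 / n := by
    intro u
    rw [Finset.sum_add_distrib, Finset.sum_const, Finset.card_univ, Fintype.card_fin]
    have hsum : ∑ i, 4 * (m:ℝ)^2 * (P u i + Q u i) / n = 8 * (m:ℝ)^2 / n := by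
      rw [← Finset.sum_div, ← Finset.mul_sum, Finset.sum_add_distrib, hP u, hQ u]
      ring
    rw [hsum]
    rw [nsmul_eq_mul]
    field_simp
    ring
  calc ∑ u, ∑ i,
        (4 * (m : ℝ) ^ 3 * (P u i - Q u i) ^ 2 * (P u i + Q u i) +
            2 * (m : ℝ) ^ 2 * (P u i + Q u i) ^ 2) /
          (fui m n (P u i) (Q u i)) ^ 2
      ≤ ∑ u, ∑ i, (4 * (m:ℝ)^2 * (P u i + Q u i) / n + 2 * (m:ℝ)^2 / n^2) := by
        apply Finset.sum_le_sum
        intro u _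
        apply Finset.sum_le_sum
        intro i _
        exact key _ _ (hP0 u i) (hQ0 u i)
    _ = ∑ u : Fin U, (10 * (m:ℝ)^2 / n) := by
        exact Finset.sum_congr rfl fun u _ => per_u u
    _ = 10 * (U : ℝ) * (m : ℝ) ^ 2 / n := by
        rw [Finset.sum_const, Finset.card_univ, Fintype.card_fin]
        rw [nsmul_eq_mul]
        field_simp
end

section
/- If m > n, then m² · ( ∑_{u=1}^U ‖P_u − Q_u‖₁ )² / ( ∑_{u=1}^U ∑_{i=1}^n f_{u,i} ) ≥ min( m^{3/2} · ∑_{u=1}^U ‖P_u − Q_u‖₁ / (2·√(U·n)), m² · ( ∑_{u=1}^U ‖P_u − Q_u‖₁ )² / (6·U·n) ), where ‖P_u − Q_u‖₁ = ∑_{i=1}^n |P_{u,i} − Q_{u,i}|. -/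
open NNReal

/-- If `m > n`, then
`m²·(∑_u ‖P_u − Q_u‖₁)² / (∑_{u,i} f_{u,i}) ≥
  min( m^{3/2}·∑_u ‖P_u − Q_u‖₁ / (2√(U·n)), m²·(∑_u ‖P_u − Q_u‖₁)² / (6·U·n) )`. -/
theorem stmt13 (U n m : ℕ) (hU : 1 ≤ U) (hn : 1 ≤ n) (hmn : n < m)
    (P Q : Fin U → Fin n → ℝ)
    (hP0 : ∀ u i, 0 ≤ P u i) (hQ0 : ∀ u i, 0 ≤ Q u i)
    (hP : ∀ u, ∑ i, P u i = 1) (hQ : ∀ u, ∑ i, Q u i = 1) :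
    min ((m : ℝ) ^ ((3 : ℝ) / 2) * (∑ u, ∑ i, |P u i - Q u i|) /
          (2 * Real.sqrt ((U : ℝ) * n)))
        ((m : ℝ) ^ 2 * (∑ u, ∑ i, |P u i - Q u i|) ^ 2 / (6 * (U : ℝ) * n)) ≤
      (m : ℝ) ^ 2 * (∑ u, ∑ i, |P u i - Q u i|) ^ 2 /
        (∑ u, ∑ i, fui m n (P u i) (Q u i)) := by
  classical
  set S : ℝ := ∑ u, ∑ i, |P u i - Q u i| with hSdef
  set F : ℝ := ∑ u, ∑ i, fui m n (P u i) (Q u i) with hFdef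
  have hS0 : 0 ≤ S := by
    apply Finset.sum_nonneg; intro u _
    exact Finset.sum_nonneg fun i _ => abs_nonneg _
  have hmpos : (0:ℝ) < m := by
    have : 0 < m := lt_of_le_of_lt (Nat.zero_le n) hmn
    exact_mod_cast this
  have hnpos : (0:ℝ) < n := by exact_mod_cast hn
  have hUpos : (0:ℝ) < U := by exact_mod_cast hU
  have hne : Nonempty (Fin U) := ⟨⟨0, hU⟩⟩
  have hnen : Nonempty (Fin n) := ⟨⟨0, hn⟩⟩
  have hfui : ∀ u i, fui m n (P u i) (Q u i)
      = max (max (Real.sqrt ((m:ℝ) * n) * |P u i - Q u i|) ((n : ℝ) * (P u i + Q u i))) 1 := by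
    intro u i; rw [fui, if_pos hmn]
  have hF0 : 0 < F := by
    apply Finset.sum_pos _ Finset.univ_nonempty
    intro u _
    apply Finset.sum_pos _ Finset.univ_nonempty
    intro i _
    rw [hfui]
    exact lt_of_lt_of_le one_pos (le_max_right _ _)
  -- upper bound on F
  have hFle : F ≤ Real.sqrt ((m:ℝ) * n) * S + 3 * U * n := by
    have h1 : F ≤ ∑ u, ∑ i, (Real.sqrt ((m:ℝ) * n) * |P u i - Q u i|
        + ((n : ℝ) * (P u i + Q u i) + 1)) := by
      apply Finset.sum_le_sum; intro u _
      apply Finset.sum_le_sum; intro i _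
      rw [hfui]
      have hb : (0:ℝ) ≤ (n : ℝ) * (P u i + Q u i) := by
        have := hP0 u i; have := hQ0 u i; positivity
      have ha : (0:ℝ) ≤ Real.sqrt ((m:ℝ) * n) * |P u i - Q u i| := by positivity
      apply max_le (max_le _ _) _ <;> nlinarith
    have hinner : ∀ u : Fin U, ∑ i, (Real.sqrt ((m:ℝ) * n) * |P u i - Q u i|
        + ((n : ℝ) * (P u i + Q u i) + 1))
        = Real.sqrt ((m:ℝ) * n) * (∑ i, |P u i - Q u i|) + 3 * n := by
      intro u
      rw [Finset.sum_add_distrib, ← Finset.mul_sum]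
      congr 1
      rw [Finset.sum_add_distrib, ← Finset.mul_sum, Finset.sum_add_distrib, hP u, hQ u]
      simp
      ring
    calc F ≤ _ := h1
      _ = Real.sqrt ((m:ℝ) * n) * S + 3 * U * n := by
          rw [Finset.sum_congr rfl fun u _ => hinner u, Finset.sum_add_distrib,
            ← Finset.mul_sum, Finset.sum_const, Finset.card_univ]
          simp [hSdef]
          ring
  -- sqrt facts
  set sm : ℝ := Real.sqrt m with hsm
  set sn : ℝ := Real.sqrt n with hsn
  set sU : ℝ := Real.sqrt U with hsU
  have hsm2 : sm * sm = m := Real.mul_self_sqrt (le_of_lt hmpos)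
  have hsn2 : sn * sn = n := Real.mul_self_sqrt (le_of_lt hnpos)
  have hsU2 : sU * sU = U := Real.mul_self_sqrt (le_of_lt hUpos)
  have hsmpos : 0 < sm := Real.sqrt_pos.mpr hmpos
  have hsnpos : 0 < sn := Real.sqrt_pos.mpr hnpos
  have hsU1 : 1 ≤ sU := by
    rw [hsU, show (1:ℝ) = Real.sqrt 1 by simp]
    exact Real.sqrt_le_sqrt (by exact_mod_cast hU)
  have hmn' : Real.sqrt ((m:ℝ) * n) = sm * sn := Real.sqrt_mul (le_of_lt hmpos) _
  have hUn' : Real.sqrt ((U:ℝ) * n) = sU * sn := Real.sqrt_mul (le_of_lt hUpos) _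
  have hm32 : (m:ℝ) ^ ((3:ℝ)/2) = (m:ℝ) * sm := by
    rw [show (3:ℝ)/2 = 1 + 1/2 by norm_num, Real.rpow_add hmpos, Real.rpow_one,
      hsm, Real.sqrt_eq_rpow]
  clear_value S F sm sn sU
  rcases eq_or_lt_of_le hS0 with hSz | hSpos
  · have h1 : (m : ℝ) ^ ((3 : ℝ) / 2) * S / (2 * Real.sqrt ((U : ℝ) * n)) = 0 := by
      rw [← hSz]; ring
    refine le_trans (min_le_left _ _) ?_
    rw [h1]
    positivity
  · -- S > 0
    rcases le_total (3 * (U:ℝ) * n) (sm * sn * S) with hcase | hcase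
    · -- F ≤ 2 sm sn S
      have hF2 : F ≤ 2 * (sm * sn * S) := by rw [hmn'] at hFle; linarith
      have step1 : (m:ℝ)^2 * S^2 / (2 * (sm * sn * S)) ≤ (m:ℝ)^2 * S^2 / F :=
        div_le_div_of_nonneg_left (by positivity) hF0 hF2
      refine le_trans (le_trans (min_le_left _ _) ?_) step1
      have hsUpos : 0 < sU := lt_of_lt_of_le one_pos hsU1
      rw [hm32, hUn', div_le_div_iff₀ (by positivity) (mul_pos two_pos
        (mul_pos (mul_pos hsmpos hsnpos) hSpos))]
      have hpos : (0:ℝ) ≤ 2*(m:ℝ)^2*sn*S^2 := by positivity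
      calc (m:ℝ)*sm*S*(2*(sm*sn*S)) = 2*(m:ℝ)*(sm*sm)*sn*S^2 := by ring
        _ = 2*(m:ℝ)^2*sn*S^2 := by rw [hsm2]; ring
        _ ≤ 2*(m:ℝ)^2*sU*sn*S^2 := by nlinarith [mul_nonneg (sub_nonneg.mpr hsU1) hpos]
        _ = (m:ℝ)^2*S^2*(2*(sU*sn)) := by ring
    · -- F ≤ 6 U n
      have hF2 : F ≤ 6 * (U:ℝ) * n := by rw [hmn'] at hFle; linarith
      have step1 : (m:ℝ)^2 * S^2 / (6 * (U:ℝ) * n) ≤ (m:ℝ)^2 * S^2 / F :=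
        div_le_div_of_nonneg_left (by positivity) hF0 hF2
      exact le_trans (min_le_right _ _) step1
end

section
/- If m ≤ n, then for every u ∈ [U], ∑_{i=1}^n Var(G_{u,i}) / f_{u,i}² ≤ 24·m, where Var(G_{u,i}) = 4·m³·(P_{u,i}−Q_{u,i})²·(P_{u,i}+Q_{u,i}) + 2·m²·(P_{u,i}+Q_{u,i})². -/
open NNReal

/-- If `m ≤ n`, then for every `u`,
`∑_i Var(G_{u,i})/f_{u,i}² ≤ 24·m`, where
`Var(G_{u,i}) = 4·m³·(P−Q)²·(P+Q) + 2·m²·(P+Q)²`. -/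
theorem stmt14 (U n m : ℕ) (hU : 1 ≤ U) (hn : 1 ≤ n) (hmn : m ≤ n)
    (P Q : Fin U → Fin n → ℝ)
    (hP0 : ∀ u i, 0 ≤ P u i) (hQ0 : ∀ u i, 0 ≤ Q u i)
    (hP : ∀ u, ∑ i, P u i = 1) (hQ : ∀ u, ∑ i, Q u i = 1) (u : Fin U) :
    ∑ i,
        (4 * (m : ℝ) ^ 3 * (P u i - Q u i) ^ 2 * (P u i + Q u i) +
            2 * (m : ℝ) ^ 2 * (P u i + Q u i) ^ 2) /
          (fui m n (P u i) (Q u i)) ^ 2 ≤ 24 * (m : ℝ) := by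
  have hnm : ¬ n < m := not_lt.mpr hmn
  have key : ∀ i : Fin n,
      (4 * (m : ℝ) ^ 3 * (P u i - Q u i) ^ 2 * (P u i + Q u i) +
          2 * (m : ℝ) ^ 2 * (P u i + Q u i) ^ 2) /
        (fui m n (P u i) (Q u i)) ^ 2 ≤ 6 * m * (P u i + Q u i) := by
    intro i
    set p := P u i with hp
    set q := Q u i with hq
    have hs : 0 ≤ p + q := add_nonneg (hP0 u i) (hQ0 u i)
    have hd : (p - q) ^ 2 ≤ (p + q) ^ 2 := by
      nlinarith [mul_nonneg (hP0 u i) (hQ0 u i)]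
    have hf : fui m n p q = max ((m : ℝ) * (p + q)) 1 := by simp [fui, hnm]
    have hf1 : (1 : ℝ) ≤ fui m n p q := by rw [hf]; exact le_max_right _ _
    have hfms : (m : ℝ) * (p + q) ≤ fui m n p q := by rw [hf]; exact le_max_left _ _
    have hfpos : (0 : ℝ) < fui m n p q := lt_of_lt_of_le one_pos hf1
    rw [div_le_iff₀ (by positivity)]
    have hm0 : (0 : ℝ) ≤ m := Nat.cast_nonneg m
    have hms : (0 : ℝ) ≤ (m : ℝ) * (p + q) := mul_nonneg hm0 hs
    have h1 : ((m : ℝ) * (p + q)) * ((m : ℝ) * (p + q)) ≤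
        fui m n p q * fui m n p q := mul_le_mul hfms hfms hms hfpos.le
    have h2 : ((m : ℝ) * (p + q)) * 1 ≤ fui m n p q * fui m n p q :=
      mul_le_mul hfms hf1 zero_le_one hfpos.le
    nlinarith [mul_nonneg (mul_nonneg hm0 hs) hs, mul_nonneg hms hms,
      mul_le_mul_of_nonneg_left hd (mul_nonneg (mul_nonneg hm0 hm0) hms),
      mul_le_mul_of_nonneg_left h1 hms, mul_le_mul_of_nonneg_left h2 hms]
  calc ∑ i, (4 * (m : ℝ) ^ 3 * (P u i - Q u i) ^ 2 * (P u i + Q u i) +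
            2 * (m : ℝ) ^ 2 * (P u i + Q u i) ^ 2) /
          (fui m n (P u i) (Q u i)) ^ 2
      ≤ ∑ i, 6 * (m : ℝ) * (P u i + Q u i) :=
        Finset.sum_le_sum fun i _ => key i
    _ = 12 * m := by
        rw [← Finset.mul_sum, Finset.sum_add_distrib, hP u, hQ u]; ring
    _ ≤ 24 * m := by nlinarith [Nat.cast_nonneg (α := ℝ) m]
end
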